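/- Let g = sl₂(K) ⋉ K² (semidirect product via the standard 2-dimensional representation) with basis a,b,c,d,e and brackets [a,b]=2b, [a,c]=−2c, [b,c]=a, [a,d]=d, [a,e]=−e, [b,e]=d, [c,d]=e, and let ḡ = g ⊕ Kf with f central. Then the bilinear map φ = d* ∧ e* ⊗ f is a 2-cocycle for the bracket of ḡ, and for every t ≠ 0 the deformed bracket [ , ]_t = [ , ] + tφ makes ḡ a perfect Lie algebra. -/

import Mathlib

/-- For ḡ = (sl₂ ⋉ K²) ⊕ Kf with basis a,b,c,d,e,f (indices 0,…,5), the map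
φ = d* ∧ e* ⊗ f is a 2-cocycle for the bracket, and for every t ≠ 0 the deformed
bracket μ + tφ makes ḡ a perfect Lie algebra. -/
theorem sl2_semidirect_plus_abelian_deformation (K V : Type*) [Field K] [CharZero K]
    [AddCommGroup V] [Module K V]
    (b : Module.Basis (Fin 6) K V)
    (μ : V →ₗ[K] V →ₗ[K] V)
    (hμa : ∀ u v : V, μ u v = - μ v u)
    (hab : μ (b 0) (b 1) = (2 : K) • b 1)
    (hac : μ (b 0) (b 2) = (-2 : K) • b 2)
    (had : μ (b 0) (b 3) = b 3)
    (hae : μ (b 0) (b 4) = - b 4)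
    (haf : μ (b 0) (b 5) = 0)
    (hbc : μ (b 1) (b 2) = b 0)
    (hbd : μ (b 1) (b 3) = 0)
    (hbe : μ (b 1) (b 4) = b 3)
    (hbf : μ (b 1) (b 5) = 0)
    (hcd : μ (b 2) (b 3) = b 4)
    (hce : μ (b 2) (b 4) = 0)
    (hcf : μ (b 2) (b 5) = 0)
    (hde : μ (b 3) (b 4) = 0)
    (hdf : μ (b 3) (b 5) = 0)
    (hef : μ (b 4) (b 5) = 0) :
    letI φ : V → V → V := fun u v =>
      (b.coord 3 u * b.coord 4 v - b.coord 4 u * b.coord 3 v) • b 5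
    (∀ x y z : V,
      (μ (φ x y) z + φ (μ x y) z) + (μ (φ y z) x + φ (μ y z) x) +
      (μ (φ z x) y + φ (μ z x) y) = 0) ∧
    (∀ t : K, t ≠ 0 →
      Submodule.span K {x : V | ∃ u v : V, x = μ u v + t • φ u v} = ⊤) := by
  have hself : ∀ x : V, μ x x = 0 := by
    intro x
    have h := hμa x x
    have h2 : (2 : K) • μ x x = 0 := by
      rw [two_smul]
      rw [eq_neg_iff_add_eq_zero] at h
      exact h
    rcases smul_eq_zero.mp h2 with h | h
    · exact absurd h two_ne_zero
    · exact h
  have hμ5 : ∀ w : V, μ (b 5) w = 0 := by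
    have h : μ (b 5) = 0 := by
      apply b.ext
      intro i
      rw [hμa]
      fin_cases i <;> simp [haf, hbf, hcf, hdf, hef, hself]
    intro w; rw [h]; rfl
  -- reversed brackets
  have hba : μ (b 1) (b 0) = -((2:K) • b 1) := by rw [hμa, hab]
  have hca : μ (b 2) (b 0) = -((-2:K) • b 2) := by rw [hμa, hac]
  have hda : μ (b 3) (b 0) = -(b 3) := by rw [hμa, had]
  have hea : μ (b 4) (b 0) = -(-b 4) := by rw [hμa, hae]
  have hcb : μ (b 2) (b 1) = -(b 0) := by rw [hμa, hbc]
  have hdb : μ (b 3) (b 1) = 0 := by rw [hμa, hbd, neg_zero]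
  have heb : μ (b 4) (b 1) = -(b 3) := by rw [hμa, hbe]
  have hdc : μ (b 3) (b 2) = -(b 4) := by rw [hμa, hcd]
  have hec : μ (b 4) (b 2) = 0 := by rw [hμa, hce, neg_zero]
  have hed : μ (b 4) (b 3) = 0 := by rw [hμa, hde, neg_zero]
  have hfa : μ (b 5) (b 0) = 0 := hμ5 _
  have hfb : μ (b 5) (b 1) = 0 := hμ5 _
  have hfc : μ (b 5) (b 2) = 0 := hμ5 _
  have hfd : μ (b 5) (b 3) = 0 := hμ5 _
  have hfe : μ (b 5) (b 4) = 0 := hμ5 _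
  set r : V → Fin 6 → K := fun u i => b.repr u i with hr
  have hexp : ∀ u v : V, μ u v =
      (r u 1 * r v 2 - r u 2 * r v 1) • b 0
      + (2 * (r u 0 * r v 1 - r u 1 * r v 0)) • b 1
      + (-2 * (r u 0 * r v 2 - r u 2 * r v 0)) • b 2
      + ((r u 0 * r v 3 - r u 3 * r v 0) + (r u 1 * r v 4 - r u 4 * r v 1)) • b 3
      + (-(r u 0 * r v 4 - r u 4 * r v 0) + (r u 2 * r v 3 - r u 3 * r v 2)) • b 4 := by
    intro u v
    conv_lhs => rw [← b.sum_repr u, ← b.sum_repr v]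
    simp only [map_sum, map_add, map_smul, LinearMap.sum_apply, LinearMap.add_apply, LinearMap.smul_apply,
      Fin.sum_univ_six, hab, hac, had, hae, haf, hbc, hbd, hbe, hbf, hcd, hce, hcf,
      hde, hdf, hef, hba, hca, hda, hea, hcb, hdb, heb, hdc, hec, hed,
      hfa, hfb, hfc, hfd, hfe, hself, hr]
    module
  have hcoord : ∀ (k : Fin 6) (u : V), b.coord k u = r u k := by
    intro k u; simp [Module.Basis.coord_apply, hr]
  have hc3 : ∀ u v : V, b.coord 3 (μ u v) =
      (r u 0 * r v 3 - r u 3 * r v 0) + (r u 1 * r v 4 - r u 4 * r v 1) := by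
    intro u v
    rw [hexp u v]
    simp [hcoord, hr, Finsupp.single_apply]
  have hc4 : ∀ u v : V, b.coord 4 (μ u v) =
      -(r u 0 * r v 4 - r u 4 * r v 0) + (r u 2 * r v 3 - r u 3 * r v 2) := by
    intro u v
    rw [hexp u v]
    simp [hcoord, hr, Finsupp.single_apply]
  refine ⟨?_, ?_⟩
  · intro x y z
    show μ ((b.coord 3 x * b.coord 4 y - b.coord 4 x * b.coord 3 y) • b 5) z
        + (b.coord 3 (μ x y) * b.coord 4 z - b.coord 4 (μ x y) * b.coord 3 z) • b 5
        + (μ ((b.coord 3 y * b.coord 4 z - b.coord 4 y * b.coord 3 z) • b 5) x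
        + (b.coord 3 (μ y z) * b.coord 4 x - b.coord 4 (μ y z) * b.coord 3 x) • b 5)
        + (μ ((b.coord 3 z * b.coord 4 x - b.coord 4 z * b.coord 3 x) • b 5) y
        + (b.coord 3 (μ z x) * b.coord 4 y - b.coord 4 (μ z x) * b.coord 3 y) • b 5) = 0
    simp only [map_smul, LinearMap.smul_apply, hμ5, smul_zero, zero_add, add_zero]
    rw [hc3, hc3, hc3, hc4, hc4, hc4]
    simp only [hcoord]
    module
  · intro t ht
    set S : Set V := {x : V | ∃ u v : V, x = μ u v + t •
      ((b.coord 3 u * b.coord 4 v - b.coord 4 u * b.coord 3 v) • b 5)} with hS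
    show Submodule.span K S = ⊤
    have mem : ∀ u v : V, μ u v + t •
        ((b.coord 3 u * b.coord 4 v - b.coord 4 u * b.coord 3 v) • b 5)
        ∈ Submodule.span K S :=
      fun u v => Submodule.subset_span ⟨u, v, rfl⟩
    have cval : ∀ i j : Fin 6, b.coord i (b j) = if j = i then 1 else 0 := by
      intro i j; simp [Module.Basis.coord_apply, Module.Basis.repr_self, Finsupp.single_apply]
    have scale : ∀ (c : K) (w : V), c ≠ 0 → c • w ∈ Submodule.span K S →
        w ∈ Submodule.span K S := by
      intro c w hc h
      have h2 := Submodule.smul_mem _ c⁻¹ h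
      rwa [smul_smul, inv_mul_cancel₀ hc, one_smul] at h2
    have hmem : ∀ i : Fin 6, b i ∈ Submodule.span K S := by
      intro i
      fin_cases i
      · have h := mem (b 1) (b 2)
        rw [hbc] at h
        simp only [cval] at h
        simp at h
        exact h
      · have h := mem (b 0) (b 1)
        rw [hab] at h
        simp only [cval] at h
        simp at h
        exact h
      · have h := mem (b 0) (b 2)
        rw [hac] at h
        simp only [cval] at h
        simp at h
        exact scale 2 _ two_ne_zero (by simpa using Submodule.neg_mem _ h)
      · have h := mem (b 0) (b 3)
        rw [had] at h
        simp only [cval] at h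
        simp at h
        exact h
      · have h := mem (b 0) (b 4)
        rw [hae] at h
        simp only [cval] at h
        simp at h
        simpa using Submodule.neg_mem _ h
      · have h := mem (b 3) (b 4)
        rw [hde] at h
        simp only [cval] at h
        simp at h
        exact scale t _ ht h
    rw [eq_top_iff, ← b.span_eq]
    apply Submodule.span_le.mpr
    rintro _ ⟨i, rfl⟩
    exact hmem i
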